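/- arXiv:1811.10603 — 3 statements merged into one kernel-verified Lean document; each statement's English description precedes it below -/
import Mathlib

section
/- For x ∈ [-π, π], the integral of the sine-skewed cardioid density from -π to x equals F(x) = 1/2 + (1/(2π))(x - λ(cos x + 1) + ρ sin x - (λρ/4)(cos 2x - 1)). -/
open Real MeasureTheory

theorem ssc_cdf (lam rho : ℝ) (hlam : lam ∈ Set.Icc (-1 : ℝ) 1)
    (hrho : rho ∈ Set.Icc (-1 : ℝ) 1) (x : ℝ) (hx : x ∈ Set.Icc (-π) π) :
    (∫ t in (-π)..x, (1 / (2 * π)) * (1 + lam * Real.sin t) * (1 + rho * Real.cos t))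
      = 1 / 2 + (1 / (2 * π)) * (x - lam * (Real.cos x + 1) + rho * Real.sin x
          - (lam * rho / 4) * (Real.cos (2 * x) - 1)) := by
  have hpi : (π : ℝ) ≠ 0 := Real.pi_ne_zero
  set F : ℝ → ℝ := fun t => (1 / (2 * π)) *
    (t - lam * Real.cos t + rho * Real.sin t - lam * rho / 4 * Real.cos (2 * t)) with hF
  have hderiv : ∀ t : ℝ, HasDerivAt F
      ((1 / (2 * π)) * (1 + lam * Real.sin t) * (1 + rho * Real.cos t)) t := by
    intro t
    have h1 : HasDerivAt (fun t : ℝ =>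
        t - lam * Real.cos t + rho * Real.sin t - lam * rho / 4 * Real.cos (2 * t))
        (1 - lam * (-Real.sin t) + rho * Real.cos t - lam * rho / 4 * (-Real.sin (2 * t) * 2)) t := by
      have hc : HasDerivAt (fun t : ℝ => Real.cos (2 * t)) (-Real.sin (2 * t) * 2) t := by
        have := (Real.hasDerivAt_cos (2 * t)).comp t ((hasDerivAt_id t).const_mul 2)
        simpa [Function.comp_def, mul_comm] using this
      exact (((hasDerivAt_id t).sub ((Real.hasDerivAt_cos t).const_mul lam)).add
        ((Real.hasDerivAt_sin t).const_mul rho)).sub (hc.const_mul (lam * rho / 4))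
    have := h1.const_mul (1 / (2 * π))
    refine this.congr_deriv ?_
    have hs2 : Real.sin (2 * t) = 2 * Real.sin t * Real.cos t := Real.sin_two_mul t
    rw [hs2]
    ring
  have hcont : ∀ t : ℝ, Continuous fun t : ℝ =>
      (1 / (2 * π)) * (1 + lam * Real.sin t) * (1 + rho * Real.cos t) := by
    intro t; continuity
  rw [intervalIntegral.integral_eq_sub_of_hasDerivAt
    (fun t _ => hderiv t) ((hcont 0).intervalIntegrable _ _)]
  simp only [hF]
  have h2pi : Real.cos (2 * -π) = 1 := by
    rw [show (2 : ℝ) * -π = -(2 * π) by ring, Real.cos_neg, Real.cos_two_pi]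
  rw [Real.cos_neg, Real.sin_neg, Real.cos_pi, Real.sin_pi, h2pi]
  field_simp
  ring
end

section
/- For real t with t ∉ {-2, -1, 0, 1, 2}, the characteristic function of the sine-skewed cardioid distribution is ψ(t) = (1/π)(1/t + λ/(i(t² - 1)) - ρt/(t² - 1) - λρ/(i(t² - 4))) sin(πt), i.e., (1/(2π)) ∫_{-π}^{π} e^{itx}(1 + λ sin x)(1 + ρ cos x) dx equals this expression. -/
open Real MeasureTheory Complex

lemma ssc_exp_int (a : ℝ) (ha : a ≠ 0) :
    ∫ x in (-π:ℝ)..π, Complex.exp ((Complex.I * a) * x)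
      = 2 * (Real.sin (a * π) : ℂ) / a := by
  have hc : Complex.I * (a:ℂ) ≠ 0 := by
    simp [Complex.I_ne_zero, Complex.ofReal_ne_zero.mpr ha]
  rw [integral_exp_mul_complex hc]
  have h1 : Complex.I * (a:ℂ) * (π:ℂ) = ((a*π : ℝ) : ℂ) * Complex.I := by push_cast; ring
  have h2 : Complex.I * (a:ℂ) * ((-π : ℝ):ℂ) = ((-(a*π) : ℝ) : ℂ) * Complex.I := by
    push_cast; ring
  rw [h1, h2, Complex.exp_mul_I, Complex.exp_mul_I]
  rw [← Complex.ofReal_sin, ← Complex.ofReal_cos, ← Complex.ofReal_sin, ← Complex.ofReal_cos]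
  rw [Real.sin_neg, Real.cos_neg]
  push_cast
  rw [div_eq_div_iff hc (Complex.ofReal_ne_zero.mpr ha)]
  ring

lemma ssc_pointwise (lam rho t x : ℝ) :
    Complex.exp (Complex.I * t * x) *
        ((1 + (lam : ℂ) * Real.sin x) * (1 + (rho : ℂ) * Real.cos x))
      = Complex.exp ((Complex.I * (t:ℝ)) * x)
        + (((lam:ℂ)*Complex.I + rho)/2) * Complex.exp ((Complex.I * ((t-1:ℝ):ℂ)) * x)
        + (((rho:ℂ) - lam*Complex.I)/2) * Complex.exp ((Complex.I * ((t+1:ℝ):ℂ)) * x)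
        + ((lam:ℂ)*rho*Complex.I/4) * Complex.exp ((Complex.I * ((t-2:ℝ):ℂ)) * x)
        - ((lam:ℂ)*rho*Complex.I/4) * Complex.exp ((Complex.I * ((t+2:ℝ):ℂ)) * x) := by
  have e1 : Complex.exp ((Complex.I * ((t-1:ℝ):ℂ)) * x)
      = Complex.exp (Complex.I * t * x) * Complex.exp (-(Complex.I * (x:ℂ))) := by
    rw [← Complex.exp_add]; congr 1; push_cast; ring
  have e2 : Complex.exp ((Complex.I * ((t+1:ℝ):ℂ)) * x)
      = Complex.exp (Complex.I * t * x) * Complex.exp (Complex.I * (x:ℂ)) := by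
    rw [← Complex.exp_add]; congr 1; push_cast; ring
  have e3 : Complex.exp ((Complex.I * ((t-2:ℝ):ℂ)) * x)
      = Complex.exp (Complex.I * t * x) * Complex.exp (-(Complex.I * (x:ℂ)))
        * Complex.exp (-(Complex.I * (x:ℂ))) := by
    rw [← Complex.exp_add, ← Complex.exp_add]; congr 1; push_cast; ring
  have e4 : Complex.exp ((Complex.I * ((t+2:ℝ):ℂ)) * x)
      = Complex.exp (Complex.I * t * x) * Complex.exp (Complex.I * (x:ℂ))
        * Complex.exp (Complex.I * (x:ℂ)) := by
    rw [← Complex.exp_add, ← Complex.exp_add]; congr 1; push_cast; ring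
  set a := Complex.exp (Complex.I * t * x) with ha
  set e := Complex.exp (Complex.I * (x:ℂ)) with he
  set b := Complex.exp (-(Complex.I * (x:ℂ))) with hb
  have h1 : e = Complex.cos x + Complex.sin x * Complex.I := by
    rw [he, show Complex.I * (x:ℂ) = (x:ℂ) * Complex.I by ring, Complex.exp_mul_I]
  have h2 : b = Complex.cos x - Complex.sin x * Complex.I := by
    rw [hb, show -(Complex.I * (x:ℂ)) = (((-x : ℝ)):ℂ) * Complex.I by push_cast; ring,
      Complex.exp_mul_I, Complex.ofReal_neg, Complex.cos_neg, Complex.sin_neg]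
    ring
  have hsin : (Complex.sin x) = -(e - b)*Complex.I/2 := by
    linear_combination (Complex.I/2) * h1 - (Complex.I/2) * h2 + Complex.sin (x:ℂ) * Complex.I_sq
  have hcos : (Complex.cos x) = (e + b)/2 := by
    linear_combination (-1/2:ℂ) * h1 + (-1/2:ℂ) * h2
  rw [Complex.ofReal_sin, Complex.ofReal_cos, hsin, hcos, e1, e2, e3, e4]
  ring

lemma ssc_div_I (z w : ℂ) (hw : w ≠ 0) : z / (Complex.I * w) = -(z * Complex.I) / w := by
  rw [div_eq_div_iff (mul_ne_zero Complex.I_ne_zero hw) hw]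
  linear_combination (z * w) * Complex.I_sq

lemma ssc_alg (lam rho S u p : ℂ) (hp : p ≠ 0) (h0 : u ≠ 0) (h1 : u - 1 ≠ 0)
    (h2 : u + 1 ≠ 0) (h3 : u - 2 ≠ 0) (h4 : u + 2 ≠ 0) :
    1/(2*p) * (2*S/u + (lam*Complex.I+rho)/2 * (2*-S/(u-1))
      + (rho-lam*Complex.I)/2*(2*-S/(u+1)) + lam*rho*Complex.I/4*(2*S/(u-2))
      - lam*rho*Complex.I/4*(2*S/(u+2)))
    = 1/p * (1/u + -(lam*Complex.I)/((u-1)*(u+1)) - rho*u/((u-1)*(u+1))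
      - -(lam*rho*Complex.I)/((u-2)*(u+2))) * S := by
  have pf1 : (u-1)⁻¹ * (u+1)⁻¹ = (1/2)*((u-1)⁻¹ - (u+1)⁻¹) := by
    field_simp; try norm_num
  have pf2 : u * ((u-1)⁻¹ * (u+1)⁻¹) = (1/2)*((u-1)⁻¹ + (u+1)⁻¹) := by
    field_simp; try norm_num
    ring
  have pf3 : (u-2)⁻¹ * (u+2)⁻¹ = (1/4)*((u-2)⁻¹ - (u+2)⁻¹) := by
    field_simp; try norm_num
  have minv1 : ((u-1)*(u+1))⁻¹ = (u-1)⁻¹ * (u+1)⁻¹ := mul_inv_rev _ _ |>.trans (mul_comm _ _)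
  have minv2 : ((u-2)*(u+2))⁻¹ = (u-2)⁻¹ * (u+2)⁻¹ := mul_inv_rev _ _ |>.trans (mul_comm _ _)
  linear_combination (S*p⁻¹*lam*Complex.I) * pf1 + (S*p⁻¹*rho) * pf2
    - (S*p⁻¹*lam*rho*Complex.I) * pf3
    + (S*p⁻¹*(rho*u+lam*Complex.I)) * minv1 - (S*p⁻¹*lam*rho*Complex.I) * minv2

theorem ssc_char_fun (lam rho : ℝ) (hlam : lam ∈ Set.Icc (-1 : ℝ) 1)
    (hrho : rho ∈ Set.Icc (-1 : ℝ) 1) (t : ℝ)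
    (ht : t ∉ ({-2, -1, 0, 1, 2} : Set ℝ)) :
    (1 / (2 * (π : ℂ))) * ∫ x in (-π)..π,
        Complex.exp (Complex.I * t * x) *
          ((1 + (lam : ℂ) * Real.sin x) * (1 + (rho : ℂ) * Real.cos x))
      = (1 / (π : ℂ)) * ((1 / (t : ℂ)) + (lam : ℂ) / (Complex.I * ((t : ℂ) ^ 2 - 1))
          - (rho : ℂ) * t / ((t : ℂ) ^ 2 - 1)
          - (lam : ℂ) * rho / (Complex.I * ((t : ℂ) ^ 2 - 4)))
        * Complex.sin (π * t) := by
  simp only [Set.mem_insert_iff, Set.mem_singleton_iff, not_or] at ht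
  obtain ⟨hm2, hm1, h0, h1, h2⟩ := ht
  have hA : (t : ℝ) ≠ 0 := h0
  have hB : t - 1 ≠ 0 := sub_ne_zero.mpr h1
  have hC : t + 1 ≠ 0 := by intro h; exact hm1 (by linarith)
  have hD : t - 2 ≠ 0 := sub_ne_zero.mpr h2
  have hE : t + 2 ≠ 0 := by intro h; exact hm2 (by linarith)
  have hInt : ∀ c : ℝ, IntervalIntegrable
      (fun x : ℝ => Complex.exp ((Complex.I * (c:ℝ)) * x)) volume (-π) π := by
    intro c
    exact (Complex.continuous_exp.comp (continuous_const.mul Complex.continuous_ofReal)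
      ).intervalIntegrable _ _
  rw [intervalIntegral.integral_congr (fun x _ => ssc_pointwise lam rho t x)]
  rw [intervalIntegral.integral_sub
      ((((hInt t).add ((hInt (t-1)).const_mul _)).add ((hInt (t+1)).const_mul _)).add
        ((hInt (t-2)).const_mul _))
      ((hInt (t+2)).const_mul _),
    intervalIntegral.integral_add
      (((hInt t).add ((hInt (t-1)).const_mul _)).add ((hInt (t+1)).const_mul _))
      ((hInt (t-2)).const_mul _),
    intervalIntegral.integral_add
      ((hInt t).add ((hInt (t-1)).const_mul _)) ((hInt (t+1)).const_mul _),
    intervalIntegral.integral_add (hInt t) ((hInt (t-1)).const_mul _),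
    intervalIntegral.integral_const_mul, intervalIntegral.integral_const_mul,
    intervalIntegral.integral_const_mul, intervalIntegral.integral_const_mul]
  rw [ssc_exp_int t hA, ssc_exp_int _ hB, ssc_exp_int _ hC, ssc_exp_int _ hD, ssc_exp_int _ hE]
  have r1 : Real.sin ((t-1)*π) = -Real.sin (t*π) := by
    rw [sub_mul, one_mul, Real.sin_sub]; simp
  have r2 : Real.sin ((t+1)*π) = -Real.sin (t*π) := by
    rw [add_mul, one_mul, Real.sin_add]; simp
  have r3 : Real.sin ((t-2)*π) = Real.sin (t*π) := by
    rw [sub_mul, Real.sin_sub, show (2:ℝ)*π = 2*π from rfl]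
    simp [Real.sin_two_pi, Real.cos_two_pi]
  have r4 : Real.sin ((t+2)*π) = Real.sin (t*π) := by
    rw [add_mul, Real.sin_add]
    simp [Real.sin_two_pi, Real.cos_two_pi]
  have rC : Complex.sin ((π:ℂ) * t) = ((Real.sin (t*π) : ℝ) : ℂ) := by
    rw [show ((π:ℂ) * t) = ((t*π : ℝ):ℂ) by push_cast; ring, ← Complex.ofReal_sin]
  rw [r1, r2, r3, r4, rC]
  have hq1 : ((t:ℂ))^2 - 1 ≠ 0 := by
    have := mul_ne_zero (Complex.ofReal_ne_zero.mpr hB) (Complex.ofReal_ne_zero.mpr hC)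
    intro h; apply this; push_cast; linear_combination h
  have hq2 : ((t:ℂ))^2 - 4 ≠ 0 := by
    have := mul_ne_zero (Complex.ofReal_ne_zero.mpr hD) (Complex.ofReal_ne_zero.mpr hE)
    intro h; apply this; push_cast; linear_combination h
  rw [ssc_div_I _ _ hq1, ssc_div_I _ _ hq2]
  have hpi : (π:ℂ) ≠ 0 := Complex.ofReal_ne_zero.mpr Real.pi_ne_zero
  have hA' : (t:ℂ) ≠ 0 := Complex.ofReal_ne_zero.mpr hA
  have hB' : ((t-1:ℝ):ℂ) ≠ 0 := Complex.ofReal_ne_zero.mpr hB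
  have hC' : ((t+1:ℝ):ℂ) ≠ 0 := Complex.ofReal_ne_zero.mpr hC
  have hD' : ((t-2:ℝ):ℂ) ≠ 0 := Complex.ofReal_ne_zero.mpr hD
  have hE' : ((t+2:ℝ):ℂ) ≠ 0 := Complex.ofReal_ne_zero.mpr hE
  push_cast
  push_cast at hB' hC' hD' hE'
  rw [show ((t:ℂ)^2 - 1) = ((t:ℂ)-1)*((t:ℂ)+1) by ring,
    show ((t:ℂ)^2 - 4) = ((t:ℂ)-2)*((t:ℂ)+2) by ring]
  exact ssc_alg lam rho (Complex.sin ((t:ℂ) * (π:ℂ))) (t:ℂ) (π:ℂ) hpi hA' hB' hC' hD' hE'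
end

section
/- With F the sine-skewed cardioid cdf, lim_{x→π⁻} ((π - x) F′(x))/(1 - F(x)) = 1, so F satisfies the von Mises condition for the Weibull domain of attraction with index 1 at its upper endpoint π. -/
open Real Filter Topology

theorem ssc_von_mises (lam rho : ℝ) (hlam : lam ∈ Set.Ioo (-1 : ℝ) 1)
    (hrho : rho ∈ Set.Ioo (-1 : ℝ) 1)
    (f F : ℝ → ℝ)
    (hf : ∀ x, f x = (1 / (2 * π)) * (1 + lam * Real.sin x) * (1 + rho * Real.cos x))
    (hF : ∀ x, F x = 1 / 2 + (1 / (2 * π)) * (x - lam * (Real.cos x + 1)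
        + rho * Real.sin x - (lam * rho / 4) * (Real.cos (2 * x) - 1))) :
    Tendsto (fun x => (π - x) * f x / (1 - F x)) (𝓝[<] π) (𝓝 1) := by
  have hpi : (0:ℝ) < π := Real.pi_pos
  set c : ℝ := (1/(2*π)) * (1 - rho) with hc
  have hcne : c ≠ 0 := by
    have : (1:ℝ) - rho > 0 := by linarith [hrho.2]
    positivity
  have hFpi : F π = 1 := by
    rw [hF]
    rw [Real.cos_pi, Real.sin_pi, Real.cos_two_pi]
    field_simp
    ring
  have hfpi : f π = c := by
    rw [hf, Real.sin_pi, Real.cos_pi, hc]; ring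
  -- derivative of F at π
  have hD : HasDerivAt F c π := by
    have h1 : HasDerivAt (fun x => 1/2 + (1/(2*π)) * (x - lam*(Real.cos x + 1)
        + rho*Real.sin x - (lam*rho/4)*(Real.cos (2*x) - 1)))
        ((1/(2*π)) * ((1 - lam * (-Real.sin π))
        + rho * Real.cos π - (lam*rho/4) * (-Real.sin (2*π) * 2))) π := by
      apply HasDerivAt.const_add
      apply HasDerivAt.const_mul
      have hcos2 : HasDerivAt (fun x : ℝ => Real.cos (2*x)) (-Real.sin (2*π) * 2) π := by
        have := (Real.hasDerivAt_cos (2*π)).comp π ((hasDerivAt_id π).const_mul 2)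
        exact this.congr_deriv (by ring)
      exact (((hasDerivAt_id π).sub
        (((Real.hasDerivAt_cos π).add_const 1).const_mul lam)).add
        ((Real.hasDerivAt_sin π).const_mul rho)).sub ((hcos2.sub_const 1).const_mul (lam*rho/4))
    have hFeq : F = fun x => 1/2 + (1/(2*π)) * (x - lam*(Real.cos x + 1)
        + rho*Real.sin x - (lam*rho/4)*(Real.cos (2*x) - 1)) := funext hF
    rw [hFeq]
    convert h1 using 1
    rw [Real.sin_pi, Real.cos_pi, Real.sin_two_pi, hc]; ring
  -- slope tendsto
  have hslope : Tendsto (fun x => (1 - F x) / (π - x)) (𝓝[<] π) (𝓝 c) := by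
    have h := hasDerivAt_iff_tendsto_slope.mp hD
    have h2 : Tendsto (slope F π) (𝓝[<] π) (𝓝 c) :=
      h.mono_left (nhdsWithin_mono π fun x hx => ne_of_lt hx)
    refine h2.congr fun x => ?_
    rw [slope_def_field, hFpi]
    rw [show (F x - 1 : ℝ) = -(1 - F x) by ring, show (x - π : ℝ) = -(π - x) by ring,
      neg_div_neg_eq]
  -- f tends to c
  have hfcont : Tendsto f (𝓝[<] π) (𝓝 c) := by
    have hfc : Continuous f := by
      rw [funext hf]; fun_prop
    rw [← hfpi]
    exact (hfc.tendsto π).mono_left nhdsWithin_le_nhds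
  have htot := hfcont.div hslope hcne
  rw [div_self hcne] at htot
  refine htot.congr fun x => ?_
  simp only [Pi.div_apply]
  rw [div_div_eq_mul_div]
  ring
end
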